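/- For real numbers c₁, c₂, c₃, c₄, c₅, c₆, the following are equivalent: (1) there exist real numbers a, b, p, q, r, s such that c₁ = a*p, c₂ = a*q + b*p, c₃ = b*q, c₄ = a*r, c₅ = a*s + b*r, and c₆ = b*s; (2) c₁²c₆² + c₄²c₃² + c₁c₃c₅² + c₂²c₄c₆ − 2c₁c₃c₄c₆ − c₁c₂c₅c₆ − c₂c₃c₄c₅ = 0, and c₂² − 4c₁c₃ ≥ 0, and c₅² − 4c₄c₆ ≥ 0. -/

import Mathlib

/-- If the two forms have a common projective root `(u,v)` (as a root of
`c₁u² - c₂uv + c₃v²`, i.e. the linear factor is `vx + uy`), they share a linear factor. -/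
lemma build_common_factor (c₁ c₂ c₃ c₄ c₅ c₆ u v : ℝ) (huv : u ≠ 0 ∨ v ≠ 0)
    (hF : c₁ * u ^ 2 - c₂ * u * v + c₃ * v ^ 2 = 0)
    (hG : c₄ * u ^ 2 - c₅ * u * v + c₆ * v ^ 2 = 0) :
    ∃ a b p q r s : ℝ,
        c₁ = a * p ∧ c₂ = a * q + b * p ∧ c₃ = b * q ∧
        c₄ = a * r ∧ c₅ = a * s + b * r ∧ c₆ = b * s := by
  rcases eq_or_ne v 0 with hv | hv
  · subst hv
    have hu : u ≠ 0 := huv.resolve_right (by simp)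
    have hc1 : c₁ = 0 := by
      have h : c₁ * u ^ 2 = 0 := by linarith
      exact (mul_eq_zero.mp h).resolve_right (pow_ne_zero 2 hu)
    have hc4 : c₄ = 0 := by
      have h : c₄ * u ^ 2 = 0 := by linarith
      exact (mul_eq_zero.mp h).resolve_right (pow_ne_zero 2 hu)
    refine ⟨0, u, c₂ / u, c₃ / u, c₅ / u, c₆ / u, ?_, ?_, ?_, ?_, ?_, ?_⟩ <;>
      field_simp <;> subst hc1 hc4 <;> linarith
  · refine ⟨v, u, c₁ / v, (c₂ * v - u * c₁) / v ^ 2, c₄ / v, (c₅ * v - u * c₄) / v ^ 2,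
      ?_, ?_, ?_, ?_, ?_, ?_⟩
    · field_simp
    · field_simp; ring
    · field_simp; linear_combination hF
    · field_simp
    · field_simp; ring
    · field_simp; linear_combination hG

/-- Semialgebraic description of the neuromanifold of the lightning self-attention
mechanism (`e' = 1`, `e = t = a = 2`): the binary quadratic forms
`c₁x² + c₂xy + c₃y²` and `c₄x² + c₅xy + c₆y²` have a common real linear factor iff
their resultant vanishes and both discriminants are nonnegative. -/
theorem attention_semialgebraic (c₁ c₂ c₃ c₄ c₅ c₆ : ℝ) :
    (∃ a b p q r s : ℝ,
        c₁ = a * p ∧ c₂ = a * q + b * p ∧ c₃ = b * q ∧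
        c₄ = a * r ∧ c₅ = a * s + b * r ∧ c₆ = b * s) ↔
    (c₁ ^ 2 * c₆ ^ 2 + c₄ ^ 2 * c₃ ^ 2 + c₁ * c₃ * c₅ ^ 2 + c₂ ^ 2 * c₄ * c₆
        - 2 * c₁ * c₃ * c₄ * c₆ - c₁ * c₂ * c₅ * c₆ - c₂ * c₃ * c₄ * c₅ = 0 ∧
      c₂ ^ 2 - 4 * c₁ * c₃ ≥ 0 ∧ c₅ ^ 2 - 4 * c₄ * c₆ ≥ 0) := by
  constructor
  · rintro ⟨a, b, p, q, r, s, h1, h2, h3, h4, h5, h6⟩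
    subst h1 h2 h3 h4 h5 h6
    refine ⟨by ring, ?_, ?_⟩
    · nlinarith [sq_nonneg (a * q - b * p)]
    · nlinarith [sq_nonneg (a * s - b * r)]
  · rintro ⟨h1, hd1, hd2⟩
    by_cases hB : c₁ * c₆ - c₃ * c₄ = 0
    · by_cases hA : c₁ * c₅ - c₂ * c₄ = 0
      · by_cases hC : c₂ * c₆ - c₃ * c₅ = 0
        · -- proportional forms
          by_cases hc1 : c₁ = 0
          · by_cases hc4 : c₄ = 0
            · -- c₁ = c₄ = 0 : root (1,0)
              exact build_common_factor _ _ _ _ _ _ 1 0 (Or.inl one_ne_zero)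
                (by simp [hc1]) (by simp [hc4])
            · -- c₁ = 0, c₄ ≠ 0 : q₁ is the zero form
              have hc2 : c₂ = 0 := by
                have h : c₂ * c₄ = 0 := by linear_combination -hA + c₅ * hc1
                exact (mul_eq_zero.mp h).resolve_right hc4
              have hc3 : c₃ = 0 := by
                have h : c₃ * c₄ = 0 := by linear_combination -hB + c₆ * hc1
                exact (mul_eq_zero.mp h).resolve_right hc4
              have he : Real.sqrt (c₅ ^ 2 - 4 * c₄ * c₆) ^ 2 = c₅ ^ 2 - 4 * c₄ * c₆ :=
                Real.sq_sqrt hd2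
              refine build_common_factor _ _ _ _ _ _ (c₅ + Real.sqrt (c₅ ^ 2 - 4 * c₄ * c₆))
                (2 * c₄) (Or.inr (mul_ne_zero two_ne_zero hc4)) ?_ ?_
              · rw [hc1, hc2, hc3]; ring
              · linear_combination c₄ * he
          · -- c₁ ≠ 0 : take the root of q₁ from the quadratic formula
            have hd : Real.sqrt (c₂ ^ 2 - 4 * c₁ * c₃) ^ 2 = c₂ ^ 2 - 4 * c₁ * c₃ :=
              Real.sq_sqrt hd1
            set d := Real.sqrt (c₂ ^ 2 - 4 * c₁ * c₃) with hdef
            refine build_common_factor _ _ _ _ _ _ (c₂ + d) (2 * c₁)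
              (Or.inr (mul_ne_zero two_ne_zero hc1)) (by linear_combination c₁ * hd) ?_
            have h : c₁ * (c₄ * (c₂ + d) ^ 2 - c₅ * (c₂ + d) * (2 * c₁)
                + c₆ * (2 * c₁) ^ 2) = 0 := by
              linear_combination c₁ * c₄ * hd - ((c₂ + d) * (2 * c₁)) * hA
                + ((2 * c₁) ^ 2) * hB
            exact (mul_eq_zero.mp h).resolve_left hc1
        · -- B = A = 0, C ≠ 0 : root (C, 0)
          refine build_common_factor _ _ _ _ _ _ (c₂ * c₆ - c₃ * c₅) 0 (Or.inl hC) ?_ ?_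
          · linear_combination c₃ * h1 + (c₂ * (c₂ * c₆ - c₃ * c₅)
              - c₃ * (c₁ * c₆ - c₃ * c₄)) * hB
          · linear_combination c₆ * h1 + (c₅ * (c₂ * c₆ - c₃ * c₅)
              - c₆ * (c₁ * c₆ - c₃ * c₄)) * hB
      · -- B = 0, A ≠ 0 : root (0, A)
        refine build_common_factor _ _ _ _ _ _ 0 (c₁ * c₅ - c₂ * c₄) (Or.inr hA) ?_ ?_
        · linear_combination c₁ * h1 + (c₂ * (c₁ * c₅ - c₂ * c₄)
            - c₁ * (c₁ * c₆ - c₃ * c₄)) * hB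
        · linear_combination c₄ * h1 + (c₅ * (c₁ * c₅ - c₂ * c₄)
            - c₄ * (c₁ * c₆ - c₃ * c₄)) * hB
    · -- B ≠ 0 : root (C, B)
      refine build_common_factor _ _ _ _ _ _ (c₂ * c₆ - c₃ * c₅) (c₁ * c₆ - c₃ * c₄)
        (Or.inr hB) ?_ ?_
      · linear_combination c₃ * h1
      · linear_combination c₆ * h1
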